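/- arXiv:2103.02283 — 2 statements merged into one kernel-verified Lean document; each statement's English description precedes it below -/
import Mathlib

section
/- Every simple line arrangement L of n ≥ 3 lines has at least three vertices of degree 2 in its arrangement graph G_L. -/
/-- A line in the Euclidean plane `ℝ × ℝ`, given by an affine equation. -/
def IsLine (l : Set (ℝ × ℝ)) : Prop :=
  ∃ a b c : ℝ, (a, b) ≠ (0, 0) ∧ l = {p : ℝ × ℝ | a * p.1 + b * p.2 = c}

/-- A simple line arrangement of `n` lines in the Euclidean plane: `n` distinct lines,
every two of which meet in exactly one point, and no point lies on three of the lines. -/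
structure SimpleLineArrangement (n : ℕ) where
  lines : Finset (Set (ℝ × ℝ))
  card_lines : lines.card = n
  isLine : ∀ l ∈ lines, IsLine l
  meet : ∀ l₁ ∈ lines, ∀ l₂ ∈ lines, l₁ ≠ l₂ → ∃! p : ℝ × ℝ, p ∈ l₁ ∩ l₂
  simple : ∀ p : ℝ × ℝ, ∀ l₁ ∈ lines, ∀ l₂ ∈ lines, ∀ l₃ ∈ lines,
    p ∈ l₁ → p ∈ l₂ → p ∈ l₃ → l₁ = l₂ ∨ l₁ = l₃ ∨ l₂ = l₃

namespace SimpleLineArrangement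

variable {n : ℕ}

/-- The vertex set of the arrangement: all intersection points of pairs of lines. -/
def verts (A : SimpleLineArrangement n) : Set (ℝ × ℝ) :=
  {p | ∃ l₁ ∈ A.lines, ∃ l₂ ∈ A.lines, l₁ ≠ l₂ ∧ p ∈ l₁ ∧ p ∈ l₂}

/-- The arrangement graph: two distinct vertices are adjacent iff some line of the
arrangement contains both and no other vertex lies strictly between them on that line. -/
def graph (A : SimpleLineArrangement n) : SimpleGraph (ℝ × ℝ) where
  Adj u v := u ≠ v ∧ u ∈ A.verts ∧ v ∈ A.verts ∧
    ∃ l ∈ A.lines, u ∈ l ∧ v ∈ l ∧ ∀ w ∈ A.verts, w ∈ l → ¬ Sbtw ℝ u w v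
  symm := by
    constructor
    rintro u v ⟨huv, hu, hv, l, hl, hul, hvl, hbet⟩
    exact ⟨huv.symm, hv, hu, l, hl, hvl, hul, fun w hw hwl hb => hbet w hw hwl hb.symm⟩
  loopless := by constructor; rintro u ⟨h, -⟩; exact h rfl

/-- The degree of a vertex in the arrangement graph. -/
noncomputable def deg (A : SimpleLineArrangement n) (v : ℝ × ℝ) : ℕ :=
  {w | A.graph.Adj v w}.ncard

/-- The number of vertices of the arrangement graph having degree `i`. -/
noncomputable def degCount (A : SimpleLineArrangement n) (i : ℕ) : ℕ :=
  {v | v ∈ A.verts ∧ A.deg v = i}.ncard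

/-- The eccentricity of a vertex: the maximum graph distance to a vertex. -/
noncomputable def ecc (A : SimpleLineArrangement n) (u : ℝ × ℝ) : ℕ :=
  sSup ((fun v => A.graph.dist u v) '' A.verts)

/-- The realization `R(L)`: the union of the closed segments joining adjacent vertices. -/
def realization (A : SimpleLineArrangement n) : Set (ℝ × ℝ) :=
  ⋃ (u : ℝ × ℝ) (v : ℝ × ℝ) (_ : A.graph.Adj u v), segment ℝ u v

/-- A point lies on the outer face of the realization if it belongs to the closure of
the unbounded connected component of the complement of the realization. -/
def OnOuterFace (A : SimpleLineArrangement n) (p : ℝ × ℝ) : Prop :=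
  ∃ q : ℝ × ℝ, q ∉ A.realization ∧
    ¬ Bornology.IsBounded (connectedComponentIn (A.realization)ᶜ q) ∧
    p ∈ closure (connectedComponentIn (A.realization)ᶜ q)

end SimpleLineArrangement

open Set

/-- Strict betweenness on the real line in order terms. -/
lemma sbtw_real_iff {a b c : ℝ} : Sbtw ℝ a b c ↔ (a < b ∧ b < c) ∨ (c < b ∧ b < a) := by
  constructor
  · rintro ⟨hw, hba, hbc⟩
    rw [← mem_segment_iff_wbtw, segment_eq_uIcc, Set.mem_uIcc] at hw
    rcases hw with ⟨h1, h2⟩ | ⟨h1, h2⟩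
    · exact Or.inl ⟨h1.lt_of_ne (Ne.symm hba), h2.lt_of_ne hbc⟩
    · exact Or.inr ⟨h1.lt_of_ne (Ne.symm hbc), h2.lt_of_ne hba⟩
  · rintro (⟨h1, h2⟩ | ⟨h1, h2⟩)
    · refine ⟨mem_segment_iff_wbtw.mp ?_, h1.ne', h2.ne⟩
      rw [segment_eq_uIcc, Set.mem_uIcc]
      exact Or.inl ⟨h1.le, h2.le⟩
    · refine ⟨mem_segment_iff_wbtw.mp ?_, h2.ne, h1.ne'⟩
      rw [segment_eq_uIcc, Set.mem_uIcc]
      exact Or.inr ⟨h1.le, h2.le⟩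

/-- Transfer of strict betweenness along the parametrization `t ↦ t • d + v`. -/
lemma sbtw_shift {v d : ℝ × ℝ} (hd : d ≠ 0) {a b c : ℝ} :
    Sbtw ℝ (a • d + v) (b • d + v) (c • d + v) ↔ Sbtw ℝ a b c := by
  have hne : v ≠ v + d := by simp [hd]
  have hinj : Function.Injective (AffineMap.lineMap v (v + d) : ℝ →ᵃ[ℝ] ℝ × ℝ) :=
    AffineMap.lineMap_injective ℝ hne
  have happ : ∀ t : ℝ, (AffineMap.lineMap v (v + d) : ℝ →ᵃ[ℝ] ℝ × ℝ) t = t • d + v := by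
    intro t
    simp [AffineMap.lineMap_apply, vsub_eq_sub, vadd_eq_add, add_sub_cancel_left, add_comm]
  rw [← happ a, ← happ b, ← happ c, hinj.sbtw_map_iff]

/-- Any line can be parametrized from any of its points. -/
lemma isLine_param {l : Set (ℝ × ℝ)} (hl : IsLine l) {v : ℝ × ℝ} (hv : v ∈ l) :
    ∃ d : ℝ × ℝ, d ≠ 0 ∧ ∀ p : ℝ × ℝ, p ∈ l ↔ ∃ t : ℝ, p = t • d + v := by
  obtain ⟨a, b, c, hab, rfl⟩ := hl
  have hv' : a * v.1 + b * v.2 = c := hv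
  refine ⟨(-b, a), ?_, ?_⟩
  · intro h
    apply hab
    have h1 : -b = 0 := congrArg Prod.fst h
    have h2 : a = 0 := congrArg Prod.snd h
    have hb : b = 0 := by linarith [neg_eq_zero.mp h1]
    rw [Prod.ext_iff]
    exact ⟨h2, hb⟩
  · intro p
    constructor
    · intro hp
      have hp' : a * p.1 + b * p.2 = c := hp
      by_cases ha : a = 0
      · have hb : b ≠ 0 := by
          intro hb; exact hab (by rw [Prod.ext_iff]; exact ⟨ha, hb⟩)
        refine ⟨(v.1 - p.1) / b, ?_⟩
        rw [Prod.ext_iff]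
        constructor
        · show p.1 = (v.1 - p.1) / b * (-b) + v.1
          field_simp
          ring
        · show p.2 = (v.1 - p.1) / b * a + v.2
          rw [ha] at hp' hv'
          have : b * p.2 = b * v.2 := by linarith
          have := mul_left_cancel₀ hb this
          simp [ha, this]
      · refine ⟨(p.2 - v.2) / a, ?_⟩
        rw [Prod.ext_iff]
        constructor
        · show p.1 = (p.2 - v.2) / a * (-b) + v.1
          field_simp
          ring_nf
          nlinarith [hp', hv']
        · show p.2 = (p.2 - v.2) / a * a + v.2
          field_simp
          ring
    · rintro ⟨t, rfl⟩
      show a * (t • (-b, a) + v).1 + b * (t • (-b, a) + v).2 = c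
      have h1 : (t • ((-b : ℝ), a) + v).1 = t * (-b) + v.1 := rfl
      have h2 : (t • ((-b : ℝ), a) + v).2 = t * a + v.2 := rfl
      rw [h1, h2]
      ring_nf
      linarith [hv']

namespace SimpleLineArrangement

variable {n : ℕ}

lemma verts_finite (A : SimpleLineArrangement n) : A.verts.Finite := by
  classical
  have hsub : A.verts ⊆ ⋃ l₁ ∈ (A.lines : Set (Set (ℝ × ℝ))),
      ⋃ l₂ ∈ (A.lines : Set (Set (ℝ × ℝ))), {p | p ∈ l₁ ∩ l₂ ∧ l₁ ≠ l₂} := by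
    rintro p ⟨l₁, h₁, l₂, h₂, hne, hp₁, hp₂⟩
    exact Set.mem_biUnion h₁ (Set.mem_biUnion h₂ ⟨⟨hp₁, hp₂⟩, hne⟩)
  refine Set.Finite.subset ?_ hsub
  refine Set.Finite.biUnion A.lines.finite_toSet fun l₁ h₁ =>
    Set.Finite.biUnion A.lines.finite_toSet fun l₂ h₂ => ?_
  by_cases hne : l₁ = l₂
  · convert Set.finite_empty
    ext p
    simp [hne]
  · obtain ⟨q, -, hu⟩ := A.meet l₁ h₁ l₂ h₂ hne
    apply Set.Finite.subset (Set.finite_singleton q)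
    rintro p ⟨hp, -⟩
    exact hu p hp

lemma exists_two_lines (A : SimpleLineArrangement n) {v : ℝ × ℝ} (hv : v ∈ A.verts) :
    ∃ l₁ ∈ A.lines, ∃ l₂ ∈ A.lines, l₁ ≠ l₂ ∧ v ∈ l₁ ∧ v ∈ l₂ ∧
      ∀ l ∈ A.lines, v ∈ l → l = l₁ ∨ l = l₂ := by
  obtain ⟨l₁, h₁, l₂, h₂, hne, hv₁, hv₂⟩ := hv
  refine ⟨l₁, h₁, l₂, h₂, hne, hv₁, hv₂, fun l hl hvl => ?_⟩
  rcases A.simple v l hl l₁ h₁ l₂ h₂ hvl hv₁ hv₂ with h | h | h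
  · exact Or.inl h
  · exact Or.inr h
  · exact absurd h hne

lemma exists_other_vertex (hn : 3 ≤ n) (A : SimpleLineArrangement n)
    {l₁ l₂ : Set (ℝ × ℝ)} (h₁ : l₁ ∈ A.lines) (h₂ : l₂ ∈ A.lines) (hne : l₁ ≠ l₂)
    {v : ℝ × ℝ} (hv₁ : v ∈ l₁) (hv₂ : v ∈ l₂) :
    ∃ p ∈ A.verts, p ∈ l₁ ∧ p ≠ v := by
  classical
  have hns : ¬ A.lines ⊆ ({l₁, l₂} : Finset (Set (ℝ × ℝ))) := by
    intro h
    have hc := Finset.card_le_card h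
    have h2 : ({l₁, l₂} : Finset (Set (ℝ × ℝ))).card ≤ 2 :=
      (Finset.card_insert_le _ _).trans (by simp)
    rw [A.card_lines] at hc
    omega
  obtain ⟨l₃, hl₃, hl₃n⟩ := Finset.not_subset.mp hns
  simp only [Finset.mem_insert, Finset.mem_singleton, not_or] at hl₃n
  obtain ⟨h31, h32⟩ := hl₃n
  obtain ⟨p, ⟨hp1, hp3⟩, -⟩ := A.meet l₁ h₁ l₃ hl₃ (Ne.symm h31)
  refine ⟨p, ⟨l₁, h₁, l₃, hl₃, Ne.symm h31, hp1, hp3⟩, hp1, ?_⟩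
  intro hpv
  have hp2 : p ∈ l₂ := by rw [hpv]; exact hv₂
  rcases A.simple p l₁ h₁ l₂ h₂ l₃ hl₃ hp1 hp2 hp3 with h | h | h
  · exact hne h
  · exact h31 h.symm
  · exact h32 h.symm

lemma exists_unique_neighbor_on_line (A : SimpleLineArrangement n) {v : ℝ × ℝ}
    (hv : v ∈ A.verts)
    (hext : ∀ w₁ ∈ A.verts, ∀ w₂ ∈ A.verts, ¬ Sbtw ℝ w₁ v w₂)
    {l : Set (ℝ × ℝ)} (hl : l ∈ A.lines) (hvl : v ∈ l)
    (hother : ∃ p ∈ A.verts, p ∈ l ∧ p ≠ v) :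
    ∃ w, w ∈ l ∧ w ∈ A.verts ∧ A.graph.Adj v w ∧
      ∀ w' ∈ l, A.graph.Adj v w' → w' = w := by
  obtain ⟨d, hd, hparam⟩ := isLine_param (A.isLine l hl) hvl
  set S : Set ℝ := {t : ℝ | t ≠ 0 ∧ t • d + v ∈ A.verts} with hS
  have hinj : Function.Injective (fun t : ℝ => t • d + v) := by
    intro a b hab
    have h1 : a • d = b • d := by
      have := add_right_cancel hab
      exact this
    exact smul_left_injective ℝ hd h1
  have hSfin : S.Finite := by
    apply Set.Finite.subset (Set.Finite.preimage hinj.injOn A.verts_finite)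
    intro t ht
    exact ht.2
  have hSne : S.Nonempty := by
    obtain ⟨p, hpv, hpl, hpne⟩ := hother
    obtain ⟨t, rfl⟩ := (hparam p).mp hpl
    refine ⟨t, ?_, hpv⟩
    intro h
    apply hpne
    simp [h]
  have hsign : ∀ s ∈ S, ∀ t ∈ S, ¬ (s < 0 ∧ 0 < t) := by
    rintro s hs t ht ⟨hs0, ht0⟩
    apply hext _ hs.2 _ ht.2
    have h := (sbtw_shift hd (v := v)).mpr (sbtw_real_iff.mpr (Or.inl ⟨hs0, ht0⟩))
    simpa using h
  obtain ⟨t₀, ht₀S, ht₀min⟩ := Set.exists_min_image S abs hSfin hSne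
  refine ⟨t₀ • d + v, (hparam _).mpr ⟨t₀, rfl⟩, ht₀S.2, ?_, ?_⟩
  · refine ⟨?_, hv, ht₀S.2, l, hl, hvl, (hparam _).mpr ⟨t₀, rfl⟩, ?_⟩
    · intro h
      apply ht₀S.1
      have : t₀ • d = 0 := by
        have := h.symm
        nth_rewrite 2 [show v = 0 + v by simp] at this
        exact add_right_cancel this
      rcases smul_eq_zero.mp this with h' | h'
      · exact h'
      · exact absurd h' hd
    · intro u hu hul hsb
      obtain ⟨s, rfl⟩ := (hparam u).mp hul
      have hsb' : Sbtw ℝ ((0 : ℝ) • d + v) (s • d + v) (t₀ • d + v) := by simpa using hsb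
      have hs0 : Sbtw ℝ 0 s t₀ := (sbtw_shift hd).mp hsb'
      rcases sbtw_real_iff.mp hs0 with ⟨h1, h2⟩ | ⟨h1, h2⟩
      · have hmin := ht₀min s ⟨h1.ne', hu⟩
        rw [abs_of_pos h1, abs_of_pos (h1.trans h2)] at hmin
        linarith
      · have hmin := ht₀min s ⟨h2.ne, hu⟩
        rw [abs_of_neg h2, abs_of_neg (h1.trans h2)] at hmin
        linarith
  · intro w' hw'l hadj'
    obtain ⟨hne', hv', hw'v, l'', hl'', hvl'', hw'l'', hbet'⟩ := hadj'
    have hl''eq : l'' = l := by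
      by_contra hne''
      obtain ⟨q, -, hq⟩ := A.meet l'' hl'' l hl hne''
      have e1 := hq v ⟨hvl'', hvl⟩
      have e2 := hq w' ⟨hw'l'', hw'l⟩
      exact hne' (e1.trans e2.symm)
    subst hl''eq
    obtain ⟨s, rfl⟩ := (hparam w').mp hw'l
    have hs0 : s ≠ 0 := by
      intro h
      apply hne'
      simp [h]
    have hsS : s ∈ S := ⟨hs0, hw'v⟩
    suffices hst : s = t₀ by rw [hst]
    by_contra hst
    have hbtw : Sbtw ℝ 0 t₀ s := by
      apply sbtw_real_iff.mpr
      rcases lt_trichotomy s 0 with h | h | h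
      · have ht₀neg : t₀ < 0 := by
          rcases lt_trichotomy t₀ 0 with h' | h' | h'
          · exact h'
          · exact absurd h' ht₀S.1
          · exact absurd ⟨h, h'⟩ (hsign s hsS t₀ ht₀S)
        have hmin := ht₀min s hsS
        rw [abs_of_neg h, abs_of_neg ht₀neg] at hmin
        exact Or.inr ⟨lt_of_le_of_ne (by linarith) hst, ht₀neg⟩
      · exact absurd h hs0
      · have ht₀pos : 0 < t₀ := by
          rcases lt_trichotomy t₀ 0 with h' | h' | h'
          · exact absurd ⟨h', h⟩ (hsign t₀ ht₀S s hsS)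
          · exact absurd h' ht₀S.1
          · exact h'
        have hmin := ht₀min s hsS
        rw [abs_of_pos h, abs_of_pos ht₀pos] at hmin
        exact Or.inl ⟨ht₀pos, lt_of_le_of_ne hmin (Ne.symm hst)⟩
    apply hbet' (t₀ • d + v) ht₀S.2 ((hparam _).mpr ⟨t₀, rfl⟩)
    have h := (sbtw_shift hd (v := v)).mpr hbtw
    simpa using h

lemma deg_eq_two_of_extreme (hn : 3 ≤ n) (A : SimpleLineArrangement n) {v : ℝ × ℝ}
    (hv : v ∈ A.verts)
    (hext : ∀ w₁ ∈ A.verts, ∀ w₂ ∈ A.verts, ¬ Sbtw ℝ w₁ v w₂) :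
    A.deg v = 2 := by
  obtain ⟨l₁, h₁, l₂, h₂, hne, hv₁, hv₂, honly⟩ := A.exists_two_lines hv
  obtain ⟨w₁, hw₁l, hw₁v, hadj₁, huniq₁⟩ := A.exists_unique_neighbor_on_line hv hext h₁ hv₁
    (A.exists_other_vertex hn h₁ h₂ hne hv₁ hv₂)
  obtain ⟨w₂, hw₂l, hw₂v, hadj₂, huniq₂⟩ := A.exists_unique_neighbor_on_line hv hext h₂ hv₂
    (A.exists_other_vertex hn h₂ h₁ hne.symm hv₂ hv₁)
  have hw12 : w₁ ≠ w₂ := by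
    intro h
    obtain ⟨q, -, hq⟩ := A.meet l₁ h₁ l₂ h₂ hne
    have e1 := hq w₁ ⟨hw₁l, h ▸ hw₂l⟩
    have e2 := hq v ⟨hv₁, hv₂⟩
    exact hadj₁.ne (e2.trans e1.symm)
  have hset : {w | A.graph.Adj v w} = {w₁, w₂} := by
    ext w
    simp only [Set.mem_setOf_eq, Set.mem_insert_iff, Set.mem_singleton_iff]
    constructor
    · intro hadj
      obtain ⟨l, hl, hvl, hwl, -⟩ := hadj.2.2.2
      rcases honly l hl hvl with rfl | rfl
      · exact Or.inl (huniq₁ w hwl hadj)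
      · exact Or.inr (huniq₂ w hwl hadj)
    · rintro (rfl | rfl)
      · exact hadj₁
      · exact hadj₂
  rw [deg, hset, Set.ncard_pair hw12]

end SimpleLineArrangement

theorem arrangement_at_least_three_degree_two (n : ℕ) (hn : 3 ≤ n)
    (A : SimpleLineArrangement n) : 3 ≤ A.degCount 2 := by
  classical
  have hnc : ¬ Collinear ℝ A.verts := by
    intro hcol
    obtain ⟨t, hts, htc⟩ := Finset.exists_subset_card_eq (show 3 ≤ A.lines.card by rw [A.card_lines]; exact hn)
    obtain ⟨l₁, l₂, l₃, h12, h13, h23, rfl⟩ := Finset.card_eq_three.mp htc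
    have h₁ : l₁ ∈ A.lines := hts (by simp)
    have h₂ : l₂ ∈ A.lines := hts (by simp)
    have h₃ : l₃ ∈ A.lines := hts (by simp)
    obtain ⟨p₁₂, ⟨hp12a, hp12b⟩, -⟩ := A.meet l₁ h₁ l₂ h₂ h12
    obtain ⟨p₁₃, ⟨hp13a, hp13b⟩, -⟩ := A.meet l₁ h₁ l₃ h₃ h13
    obtain ⟨p₂₃, ⟨hp23a, hp23b⟩, -⟩ := A.meet l₂ h₂ l₃ h₃ h23
    have hv12 : p₁₂ ∈ A.verts := ⟨l₁, h₁, l₂, h₂, h12, hp12a, hp12b⟩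
    have hv13 : p₁₃ ∈ A.verts := ⟨l₁, h₁, l₃, h₃, h13, hp13a, hp13b⟩
    have hv23 : p₂₃ ∈ A.verts := ⟨l₂, h₂, l₃, h₃, h23, hp23a, hp23b⟩
    have hne1213 : p₁₂ ≠ p₁₃ := by
      intro h
      have hp12c : p₁₂ ∈ l₃ := by rw [h]; exact hp13b
      rcases A.simple p₁₂ l₁ h₁ l₂ h₂ l₃ h₃ hp12a hp12b hp12c with e | e | e
      · exact h12 e
      · exact h13 e
      · exact h23 e
    obtain ⟨d, hd, hparam⟩ := isLine_param (A.isLine l₁ h₁) hp12a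
    obtain ⟨t0, hpt0⟩ := (hparam p₁₃).mp hp13a
    have ht0 : t0 ≠ 0 := by
      rintro rfl
      apply hne1213
      rw [hpt0]
      simp
    obtain ⟨e, he⟩ := (collinear_iff_of_mem hv12).mp hcol
    obtain ⟨r₁, hr₁⟩ := he p₁₃ hv13
    obtain ⟨r₂, hr₂⟩ := he p₂₃ hv23
    rw [vadd_eq_add] at hr₁ hr₂
    have hr₁0 : r₁ ≠ 0 := by
      rintro rfl
      apply hne1213.symm
      rw [hr₁]
      simp
    have hre : r₁ • e = t0 • d := add_right_cancel (hr₁.symm.trans hpt0)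
    have hee : e = (r₁⁻¹ * t0) • d := by
      rw [mul_smul, ← hre, inv_smul_smul₀ hr₁0]
    have hp23l1 : p₂₃ ∈ l₁ := by
      refine (hparam p₂₃).mpr ⟨r₂ * (r₁⁻¹ * t0), ?_⟩
      rw [hr₂, hee, smul_smul]
    rcases A.simple p₂₃ l₁ h₁ l₂ h₂ l₃ h₃ hp23l1 hp23a hp23b with e' | e' | e'
    · exact h12 e'
    · exact h13 e'
    · exact h23 e'
  set E := (convexHull ℝ A.verts).extremePoints ℝ with hE
  have hEsub : E ⊆ A.verts := extremePoints_convexHull_subset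
  have hEfin : E.Finite := A.verts_finite.subset hEsub
  have hdeg2 : ∀ v ∈ E, A.deg v = 2 := by
    intro v hvE
    refine A.deg_eq_two_of_extreme hn (hEsub hvE) ?_
    intro w₁ hw₁ w₂ hw₂ hsb
    obtain ⟨-, hmin⟩ := mem_extremePoints.mp hvE
    have hvo : v ∈ openSegment ℝ w₁ w₂ := by
      rw [openSegment_eq_image_lineMap]
      exact hsb.mem_image_Ioo
    have hres := hmin w₁ (subset_convexHull ℝ _ hw₁) w₂ (subset_convexHull ℝ _ hw₂) hvo
    exact hsb.2.1 hres.1.symm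
  have hE3 : 3 ≤ E.ncard := by
    by_contra hlt
    push_neg at hlt
    obtain ⟨p, q, hpq⟩ : ∃ p q : ℝ × ℝ, E ⊆ {p, q} := by
      have h2 : E.ncard = 0 ∨ E.ncard = 1 ∨ E.ncard = 2 := by omega
      rcases h2 with h | h | h
      · exact ⟨0, 0, by rw [(Set.ncard_eq_zero hEfin).mp h]; exact Set.empty_subset _⟩
      · obtain ⟨a, ha⟩ := Set.ncard_eq_one.mp h
        exact ⟨a, a, by rw [ha]; simp⟩
      · obtain ⟨a, b, -, hab⟩ := Set.ncard_eq_two.mp h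
        exact ⟨a, b, hab.subset⟩
    have hKM : convexHull ℝ E = convexHull ℝ A.verts := by
      have h1 := closure_convexHull_extremePoints (A.verts_finite.isCompact_convexHull ℝ)
        (convex_convexHull ℝ _)
      rwa [(hEfin.isClosed_convexHull ℝ).closure_eq] at h1
    have hseg : A.verts ⊆ segment ℝ p q := by
      intro x hx
      have hx1 : x ∈ convexHull ℝ E := hKM ▸ subset_convexHull ℝ _ hx
      have hx2 := convexHull_mono hpq hx1
      rwa [convexHull_pair] at hx2
    apply hnc
    refine Collinear.subset hseg ?_
    rw [collinear_iff_of_mem (left_mem_segment ℝ p q)]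
    refine ⟨q - p, ?_⟩
    rintro x ⟨a, b, ha, hb, hab, rfl⟩
    refine ⟨b, ?_⟩
    rw [vadd_eq_add]
    have haa : a = 1 - b := by linarith
    subst haa
    simp [smul_sub, sub_smul, one_smul]
    abel
  have hsub : E ⊆ {v | v ∈ A.verts ∧ A.deg v = 2} := fun v hv => ⟨hEsub hv, hdeg2 v hv⟩
  have hDfin : {v | v ∈ A.verts ∧ A.deg v = 2}.Finite :=
    A.verts_finite.subset fun v hv => hv.1
  calc 3 ≤ E.ncard := hE3
    _ ≤ A.degCount 2 := Set.ncard_le_ncard hsub hDfin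
end

section
/- Let L be a simple line arrangement of n ≥ 3 lines and let u, v be two distinct vertices of G_L lying on a common line l ∈ L. Then there is a unique shortest u,v-path in G_L, all of its vertices lie on l, and its length equals one plus the number of vertices of V(L) that lie strictly between u and v on l. -/
open Set

lemma real_wbtw_iff {x y z : ℝ} : Wbtw ℝ x y z ↔ (x ≤ y ∧ y ≤ z) ∨ (z ≤ y ∧ y ≤ x) := by
  rw [← mem_segment_iff_wbtw, segment_eq_uIcc, Set.mem_uIcc]

lemma real_sbtw_iff {x y z : ℝ} : Sbtw ℝ x y z ↔ (x < y ∧ y < z) ∨ (z < y ∧ y < x) := by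
  constructor
  · rintro ⟨hw, h1, h2⟩
    rcases real_wbtw_iff.1 hw with ⟨ha, hb⟩ | ⟨ha, hb⟩
    · exact Or.inl ⟨lt_of_le_of_ne ha (Ne.symm h1), lt_of_le_of_ne hb h2⟩
    · exact Or.inr ⟨lt_of_le_of_ne ha (Ne.symm h2), lt_of_le_of_ne hb h1⟩
  · rintro (⟨h1, h2⟩ | ⟨h1, h2⟩)
    · exact ⟨real_wbtw_iff.2 (Or.inl ⟨h1.le, h2.le⟩), h1.ne', h2.ne⟩
    · exact ⟨real_wbtw_iff.2 (Or.inr ⟨h1.le, h2.le⟩), h2.ne, h1.ne'⟩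

open Classical in
/-- A chosen affine functional vanishing exactly on the line. -/
noncomputable def lineF (m : Set (ℝ × ℝ)) : (ℝ × ℝ) → ℝ :=
  if h : IsLine m then
    fun p => h.choose * p.1 + h.choose_spec.choose * p.2 - h.choose_spec.choose_spec.choose
  else fun _ => 0

lemma lineF_mem_iff {m : Set (ℝ × ℝ)} (h : IsLine m) {p : ℝ × ℝ} :
    p ∈ m ↔ lineF m p = 0 := by
  classical
  rw [lineF, dif_pos h]
  have hm := h.choose_spec.choose_spec.choose_spec.2
  conv_lhs => rw [hm]
  simp only [Set.mem_setOf_eq]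
  constructor <;> intro h' <;> linarith

lemma lineF_lineMap (m : Set (ℝ × ℝ)) (x y : ℝ × ℝ) (r : ℝ) :
    lineF m (AffineMap.lineMap x y r) = lineF m x + r * (lineF m y - lineF m x) := by
  classical
  rw [lineF]
  have : (AffineMap.lineMap x y r : ℝ × ℝ) = (x.1 + r * (y.1 - x.1), x.2 + r * (y.2 - x.2)) := by
    simp [AffineMap.lineMap_apply_module, Prod.ext_iff]
    constructor <;> ring
  split
  · rw [this]; dsimp only; ring
  · simp

/-- If the functional changes sign strictly, the segment crosses the line strictly between. -/
lemma lineF_cross {m : Set (ℝ × ℝ)} (h : IsLine m) {x y : ℝ × ℝ}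
    (hxy : lineF m x * lineF m y < 0) :
    ∃ p, p ∈ m ∧ Sbtw ℝ x p y ∧ Wbtw ℝ x p y := by
  set fx := lineF m x
  set fy := lineF m y
  have hne : fx ≠ fy := by
    intro hEq
    rw [hEq] at hxy
    exact absurd (mul_self_nonneg fy) (not_le.2 hxy)
  have hfx : fx ≠ 0 := by rintro h0; rw [h0] at hxy; simp at hxy
  have hfy : fy ≠ 0 := by rintro h0; rw [h0] at hxy; simp at hxy
  set r : ℝ := fx / (fx - fy)
  have hsub : fx - fy ≠ 0 := sub_ne_zero.2 hne
  have hr0 : 0 < r ∧ r < 1 := by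
    rcases lt_or_gt_of_ne hfx with hx0 | hx0
    · have hy0 : 0 < fy := by nlinarith
      constructor
      · apply div_pos_of_neg_of_neg hx0; linarith
      · rw [div_lt_one_of_neg (by linarith : fx - fy < 0)] ; linarith
    · have hy0 : fy < 0 := by nlinarith
      constructor
      · apply div_pos hx0; linarith
      · rw [div_lt_one (by linarith : 0 < fx - fy)]; linarith
  have hxny : x ≠ y := by rintro rfl; exact hne rfl
  refine ⟨AffineMap.lineMap x y r, ?_, ?_, ?_⟩
  · rw [lineF_mem_iff h, lineF_lineMap]
    have hre : r * (fy - fx) = -fx := by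
      rw [div_mul_eq_mul_div, div_eq_iff hsub]; ring
    show fx + r * (fy - fx) = 0
    rw [hre]; ring
  · exact sbtw_lineMap_iff.2 ⟨hxny, hr0.1, hr0.2⟩
  · exact (sbtw_lineMap_iff.2 ⟨hxny, hr0.1, hr0.2⟩).wbtw

/-- Lines are convex: a point weakly between two points of a line is on the line. -/
lemma lineF_convex {m : Set (ℝ × ℝ)} (h : IsLine m) {x y p : ℝ × ℝ}
    (hx : x ∈ m) (hy : y ∈ m) (hp : Wbtw ℝ x p y) : p ∈ m := by
  obtain ⟨r, _, rfl⟩ := hp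
  rw [lineF_mem_iff h] at hx hy ⊢
  rw [lineF_lineMap, hx, hy]
  ring

/-- If a point of the line lies strictly between two points not on the line,
the functional takes strictly opposite signs at those points. -/
lemma lineF_opp {m : Set (ℝ × ℝ)} (h : IsLine m) {x y w : ℝ × ℝ}
    (hx : x ∉ m) (hy : y ∉ m) (hw : w ∈ m) (hs : Sbtw ℝ x w y) :
    lineF m x * lineF m y < 0 := by
  obtain ⟨r, hr, rfl⟩ := hs.wbtw
  have hfx : lineF m x ≠ 0 := fun h0 => hx ((lineF_mem_iff h).2 h0)
  have hfy : lineF m y ≠ 0 := fun h0 => hy ((lineF_mem_iff h).2 h0)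
  have hw0 := (lineF_mem_iff h).1 hw
  rw [lineF_lineMap] at hw0
  have hr0 : r ≠ 0 := by rintro rfl; apply hfx; linarith
  have hr1 : r ≠ 1 := by rintro rfl; apply hfy; linarith
  have h0 : 0 < r := lt_of_le_of_ne hr.1 (Ne.symm hr0)
  have h1 : r < 1 := lt_of_le_of_ne hr.2 hr1
  by_contra hge
  push_neg at hge
  have hfx2 : 0 < lineF m x ^ 2 := by positivity
  have key : lineF m x ^ 2 * (1 - r) = -(r * (lineF m x * lineF m y)) := by
    linear_combination (lineF m x) * hw0
  nlinarith [key, hfx2, mul_nonneg h0.le hge]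

/-! ### Sign distance across a line -/

/-- `|sign - sign|` distance of two points relative to a line. -/
noncomputable def sd (m : Set (ℝ × ℝ)) (x y : ℝ × ℝ) : ℝ :=
  |Real.sign (lineF m x) - Real.sign (lineF m y)|

lemma sd_nonneg (m : Set (ℝ × ℝ)) (x y : ℝ × ℝ) : 0 ≤ sd m x y := abs_nonneg _

lemma sd_self (m : Set (ℝ × ℝ)) (x : ℝ × ℝ) : sd m x x = 0 := by simp [sd]

lemma sd_comm (m : Set (ℝ × ℝ)) (x y : ℝ × ℝ) : sd m x y = sd m y x := abs_sub_comm _ _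

lemma sd_triangle (m : Set (ℝ × ℝ)) (x y z : ℝ × ℝ) : sd m x z ≤ sd m x y + sd m y z :=
  abs_sub_le _ _ _

lemma abs_sign_le_one (r : ℝ) : |Real.sign r| ≤ 1 := by
  rcases Real.sign_apply_eq r with h | h | h <;> rw [h] <;> norm_num

lemma sd_le_two (m : Set (ℝ × ℝ)) (x y : ℝ × ℝ) : sd m x y ≤ 2 := by
  calc sd m x y ≤ |Real.sign (lineF m x)| + |Real.sign (lineF m y)| := abs_sub _ _
  _ ≤ 2 := by linarith [abs_sign_le_one (lineF m x), abs_sign_le_one (lineF m y)]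

lemma sign_of_mem {m : Set (ℝ × ℝ)} (h : IsLine m) {x : ℝ × ℝ} (hx : x ∈ m) :
    Real.sign (lineF m x) = 0 := by
  rw [(lineF_mem_iff h).1 hx, Real.sign_zero]

lemma sd_le_one_of_mem_left {m : Set (ℝ × ℝ)} (h : IsLine m) {x y : ℝ × ℝ} (hx : x ∈ m) :
    sd m x y ≤ 1 := by
  rw [sd, sign_of_mem h hx, zero_sub, abs_neg]
  exact abs_sign_le_one _

lemma sd_eq_zero_of_mem_both {m : Set (ℝ × ℝ)} (h : IsLine m) {x y : ℝ × ℝ}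
    (hx : x ∈ m) (hy : y ∈ m) : sd m x y = 0 := by
  rw [sd, sign_of_mem h hx, sign_of_mem h hy, sub_zero, abs_zero]

lemma sd_eq_one_of_mem_left {m : Set (ℝ × ℝ)} (h : IsLine m) {x y : ℝ × ℝ}
    (hx : x ∈ m) (hy : y ∉ m) : sd m x y = 1 := by
  rw [sd, sign_of_mem h hx, zero_sub, abs_neg]
  have : lineF m y ≠ 0 := fun h0 => hy ((lineF_mem_iff h).2 h0)
  rcases Real.sign_apply_eq_of_ne_zero _ this with h' | h' <;> rw [h'] <;> norm_num

lemma sd_eq_two_of_opp {m : Set (ℝ × ℝ)} {x y : ℝ × ℝ}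
    (hxy : lineF m x * lineF m y < 0) : sd m x y = 2 := by
  rcases mul_neg_iff.1 hxy with ⟨hx, hy⟩ | ⟨hx, hy⟩
  · rw [sd, Real.sign_of_pos hx, Real.sign_of_neg hy]; norm_num
  · rw [sd, Real.sign_of_neg hx, Real.sign_of_pos hy]; norm_num

lemma sd_eq_zero_of_not_opp {m : Set (ℝ × ℝ)} (h : IsLine m) {x y : ℝ × ℝ}
    (hx : x ∉ m) (hy : y ∉ m) (hxy : ¬ lineF m x * lineF m y < 0) : sd m x y = 0 := by
  have hfx : lineF m x ≠ 0 := fun h0 => hx ((lineF_mem_iff h).2 h0)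
  have hfy : lineF m y ≠ 0 := fun h0 => hy ((lineF_mem_iff h).2 h0)
  have hpos : 0 < lineF m x * lineF m y :=
    lt_of_le_of_ne (not_lt.1 hxy) (Ne.symm (mul_ne_zero hfx hfy))
  rcases mul_pos_iff.1 hpos with ⟨h1, h2⟩ | ⟨h1, h2⟩
  · rw [sd, Real.sign_of_pos h1, Real.sign_of_pos h2, sub_self, abs_zero]
  · rw [sd, Real.sign_of_neg h1, Real.sign_of_neg h2, sub_self, abs_zero]

lemma sd_eq_two_of_not_mem {m : Set (ℝ × ℝ)} (h : IsLine m) {x y : ℝ × ℝ}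
    (hx : x ∉ m) (hy : y ∉ m) : sd m x y = 2 ↔ lineF m x * lineF m y < 0 := by
  constructor
  · intro h2
    by_contra hn
    rw [sd_eq_zero_of_not_opp h hx hy hn] at h2
    norm_num at h2
  · exact sd_eq_two_of_opp

/-! ### Arrangement-level lemmas -/

namespace SimpleLineArrangement

variable {n : ℕ} (A : SimpleLineArrangement n)

lemma meet_unique {m₁ m₂ : Set (ℝ × ℝ)} (h1 : m₁ ∈ A.lines) (h2 : m₂ ∈ A.lines)
    (hne : m₁ ≠ m₂) {p q : ℝ × ℝ} (hp1 : p ∈ m₁) (hp2 : p ∈ m₂)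
    (hq1 : q ∈ m₁) (hq2 : q ∈ m₂) : p = q := by
  obtain ⟨r, -, hr⟩ := A.meet m₁ h1 m₂ h2 hne
  rw [hr p ⟨hp1, hp2⟩, hr q ⟨hq1, hq2⟩]

lemma verts_finite_s8 : A.verts.Finite := by
  apply Set.Finite.subset (s := ⋃ m₁ ∈ (A.lines : Set (Set (ℝ × ℝ))),
    ⋃ m₂ ∈ (A.lines : Set (Set (ℝ × ℝ))), {p | m₁ ≠ m₂ ∧ p ∈ m₁ ∧ p ∈ m₂})
  · apply Set.Finite.biUnion A.lines.finite_toSet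
    intro m₁ h₁
    apply Set.Finite.biUnion A.lines.finite_toSet
    intro m₂ h₂
    by_cases h : m₁ = m₂
    · convert Set.finite_empty
      ext p; simp [h]
    · apply Set.Subsingleton.finite
      rintro p ⟨-, hp1, hp2⟩ q ⟨-, hq1, hq2⟩
      exact A.meet_unique h₁ h₂ h hp1 hp2 hq1 hq2
  · rintro p ⟨m₁, hm₁, m₂, hm₂, hne, hp1, hp2⟩
    simp only [Set.mem_iUnion]
    exact ⟨m₁, hm₁, m₂, hm₂, hne, hp1, hp2⟩

open Classical in
/-- The second line through a vertex `w` of the line `l`. -/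
noncomputable def other (l : Set (ℝ × ℝ)) (w : ℝ × ℝ) : Set (ℝ × ℝ) :=
  if h : ∃ m ∈ A.lines, m ≠ l ∧ w ∈ m then h.choose else ∅

lemma other_spec {l : Set (ℝ × ℝ)} {w : ℝ × ℝ} (hl : l ∈ A.lines) (hw : w ∈ A.verts)
    (hwl : w ∈ l) : A.other l w ∈ A.lines ∧ A.other l w ≠ l ∧ w ∈ A.other l w := by
  classical
  obtain ⟨m₁, hm₁, m₂, hm₂, hne, hw1, hw2⟩ := hw
  have hex : ∃ m ∈ A.lines, m ≠ l ∧ w ∈ m := by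
    rcases A.simple w l hl m₁ hm₁ m₂ hm₂ hwl hw1 hw2 with h | h | h
    · exact ⟨m₂, hm₂, fun hc => hne (h ▸ hc ▸ rfl), hw2⟩
    · exact ⟨m₁, hm₁, fun hc => hne (hc ▸ h ▸ rfl), hw1⟩
    · exact absurd h hne
  rw [other, dif_pos hex]
  obtain ⟨h1, h2, h3⟩ := hex.choose_spec
  exact ⟨h1, h2, h3⟩

lemma other_eq {l : Set (ℝ × ℝ)} {w : ℝ × ℝ} (hl : l ∈ A.lines) (hw : w ∈ A.verts)
    (hwl : w ∈ l) {m : Set (ℝ × ℝ)} (hm : m ∈ A.lines) (hne : m ≠ l) (hwm : w ∈ m) :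
    m = A.other l w := by
  obtain ⟨ho, hol, hwo⟩ := A.other_spec hl hw hwl
  rcases A.simple w m hm l hl (A.other l w) ho hwm hwl hwo with h | h | h
  · exact absurd h hne
  · exact h
  · exact absurd h.symm hol

lemma adj_sum_le {x y : ℝ × ℝ} (hadj : A.graph.Adj x y) :
    ∑ m ∈ A.lines, sd m x y ≤ 2 := by
  classical
  obtain ⟨hne, hx, hy, m₀, hm₀, hxm₀, hym₀, hno⟩ := hadj
  have key : ∀ m ∈ A.lines,
      sd m x y ≤ if m = A.other m₀ x ∨ m = A.other m₀ y then 1 else 0 := by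
    intro m hm
    by_cases hmx : m = A.other m₀ x
    · rw [if_pos (Or.inl hmx)]
      subst hmx
      exact sd_le_one_of_mem_left (A.isLine _ hm) (A.other_spec hm₀ hx hxm₀).2.2
    by_cases hmy : m = A.other m₀ y
    · rw [if_pos (Or.inr hmy)]
      subst hmy
      rw [sd_comm]
      exact sd_le_one_of_mem_left (A.isLine _ hm) (A.other_spec hm₀ hy hym₀).2.2
    rw [if_neg (by tauto)]
    by_cases hm0 : m = m₀
    · subst hm0
      exact (sd_eq_zero_of_mem_both (A.isLine m hm) hxm₀ hym₀).le
    have hxm : x ∉ m := fun hxm => hmx (A.other_eq hm₀ hx hxm₀ hm hm0 hxm)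
    have hym : y ∉ m := fun hym => hmy (A.other_eq hm₀ hy hym₀ hm hm0 hym)
    have hnopp : ¬ lineF m x * lineF m y < 0 := by
      intro hop
      obtain ⟨p, hpm, hsp, hwp⟩ := lineF_cross (A.isLine m hm) hop
      have hpm₀ : p ∈ m₀ := lineF_convex (A.isLine m₀ hm₀) hxm₀ hym₀ hwp
      exact hno p ⟨m, hm, m₀, hm₀, hm0, hpm, hpm₀⟩ hpm₀ hsp
    exact (sd_eq_zero_of_not_opp (A.isLine m hm) hxm hym hnopp).le
  calc ∑ m ∈ A.lines, sd m x y
      ≤ ∑ m ∈ A.lines, (if m = A.other m₀ x ∨ m = A.other m₀ y then (1:ℝ) else 0) :=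
        Finset.sum_le_sum key
    _ = ((A.lines.filter (fun m => m = A.other m₀ x ∨ m = A.other m₀ y)).card : ℝ) := by
        rw [Finset.sum_boole]
    _ ≤ 2 := by
        have hsub : A.lines.filter (fun m => m = A.other m₀ x ∨ m = A.other m₀ y)
            ⊆ {A.other m₀ x, A.other m₀ y} := by
          intro m hm
          simp only [Finset.mem_filter] at hm
          simp only [Finset.mem_insert, Finset.mem_singleton]
          exact hm.2
        have := Finset.card_le_card hsub
        have h2 : ({A.other m₀ x, A.other m₀ y} : Finset (Set (ℝ × ℝ))).card ≤ 2 := by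
          apply le_trans (Finset.card_insert_le _ _)
          simp
        have : (A.lines.filter (fun m => m = A.other m₀ x ∨ m = A.other m₀ y)).card ≤ 2 :=
          le_trans this h2
        exact_mod_cast this

lemma walk_sum_le {x y : ℝ × ℝ} (W : A.graph.Walk x y) :
    ∑ m ∈ A.lines, sd m x y ≤ 2 * W.length := by
  induction W with
  | nil => simp [sd_self]
  | @cons a b c h p ih =>
    calc ∑ m ∈ A.lines, sd m a c
        ≤ ∑ m ∈ A.lines, (sd m a b + sd m b c) :=
          Finset.sum_le_sum fun m _ => sd_triangle m a b c
      _ = ∑ m ∈ A.lines, sd m a b + ∑ m ∈ A.lines, sd m b c := Finset.sum_add_distrib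
      _ ≤ 2 + 2 * p.length := add_le_add (A.adj_sum_le h) ih
      _ = 2 * (SimpleGraph.Walk.cons h p).length := by
          rw [SimpleGraph.Walk.length_cons]; push_cast; ring

lemma walk_sum_off_line {x y : ℝ × ℝ} {l : Set (ℝ × ℝ)} (hl : l ∈ A.lines)
    (hx : x ∈ l) (hy : y ∈ l) (W : A.graph.Walk x y) {z : ℝ × ℝ}
    (hz : z ∈ W.support) (hzl : z ∉ l) :
    ∑ m ∈ A.lines, sd m x y + 2 ≤ 2 * W.length := by
  classical
  have hlen : (W.takeUntil z hz).length + (W.dropUntil z hz).length = W.length := by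
    rw [← SimpleGraph.Walk.length_append, W.take_spec hz]
  have h1 := A.walk_sum_le (W.takeUntil z hz)
  have h2 := A.walk_sum_le (W.dropUntil z hz)
  have hstep : ∀ m ∈ A.lines, (if m = l then (2:ℝ) else sd m x y) ≤ sd m x z + sd m z y := by
    intro m hm
    by_cases h : m = l
    · subst h
      rw [if_pos rfl]
      have e1 : sd m x z = 1 := sd_eq_one_of_mem_left (A.isLine m hm) hx hzl
      have e2 : sd m z y = 1 := by
        rw [sd_comm]; exact sd_eq_one_of_mem_left (A.isLine m hm) hy hzl
      rw [e1, e2]; norm_num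
    · rw [if_neg h]; exact sd_triangle m x z y
  have hsd_l : sd l x y = 0 := sd_eq_zero_of_mem_both (A.isLine l hl) hx hy
  have hsum : ∑ m ∈ A.lines, (if m = l then (2:ℝ) else sd m x y)
      = ∑ m ∈ A.lines, sd m x y + 2 := by
    rw [← Finset.add_sum_erase _ _ hl, ← Finset.add_sum_erase _ (fun m => sd m x y) hl]
    rw [if_pos rfl, hsd_l]
    rw [Finset.sum_congr rfl (fun m hm => if_neg (Finset.ne_of_mem_erase hm))]
    ring
  have hmain : ∑ m ∈ A.lines, sd m x y + 2
      ≤ ∑ m ∈ A.lines, sd m x z + ∑ m ∈ A.lines, sd m z y := by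
    rw [← hsum, ← Finset.sum_add_distrib]
    exact Finset.sum_le_sum hstep
  have : (((W.takeUntil z hz).length : ℝ) + (W.dropUntil z hz).length) = (W.length : ℝ) := by
    exact_mod_cast congrArg (Nat.cast : ℕ → ℝ) hlen
  linarith

lemma sum_ge_of_between {u v : ℝ × ℝ} {l : Set (ℝ × ℝ)} (hl : l ∈ A.lines)
    (hu : u ∈ A.verts) (hv : v ∈ A.verts) (huv : u ≠ v) (hul : u ∈ l) (hvl : v ∈ l) :
    2 * ({w | w ∈ A.verts ∧ w ∈ l ∧ Sbtw ℝ u w v}.ncard : ℝ) + 2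
      ≤ ∑ m ∈ A.lines, sd m u v := by
  classical
  set S := {w | w ∈ A.verts ∧ w ∈ l ∧ Sbtw ℝ u w v} with hS
  have hSfin : S.Finite := A.verts_finite_s8.subset (fun w hw => hw.1)
  set F := hSfin.toFinset with hF
  -- basic facts about `other` at points of S, u and v
  have houspec := A.other_spec hl hu hul
  have hovspec := A.other_spec hl hv hvl
  have hmemF : ∀ w ∈ F, w ∈ A.verts ∧ w ∈ l ∧ Sbtw ℝ u w v := by
    intro w hw
    rwa [hF, Set.Finite.mem_toFinset] at hw
  have holw : ∀ w ∈ F, A.other l w ∈ A.lines ∧ A.other l w ≠ l ∧ w ∈ A.other l w := by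
    intro w hw
    obtain ⟨h1, h2, h3⟩ := hmemF w hw
    exact A.other_spec hl h1 h2
  -- the separating lines
  have hinj : Set.InjOn (A.other l) F := by
    intro w1 h1 w2 h2 heq
    obtain ⟨ha1, hb1, hc1⟩ := holw w1 h1
    obtain ⟨ha2, hb2, hc2⟩ := holw w2 h2
    exact A.meet_unique ha1 hl hb1 hc1 (hmemF w1 h1).2.1 (heq ▸ hc2) (hmemF w2 h2).2.1
  have hsd2 : ∀ w ∈ F, sd (A.other l w) u v = 2 := by
    intro w hw
    obtain ⟨hwv, hwl, hsb⟩ := hmemF w hw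
    obtain ⟨ha, hb, hc⟩ := holw w hw
    have hunm : u ∉ A.other l w := fun hum =>
      hsb.ne_left (A.meet_unique ha hl hb hc hwl hum hul)
    have hvnm : v ∉ A.other l w := fun hvm =>
      hsb.ne_right (A.meet_unique ha hl hb hc hwl hvm hvl)
    exact sd_eq_two_of_opp (lineF_opp (A.isLine _ ha) hunm hvnm hc hsb)
  have hsdu : sd (A.other l u) u v = 1 := by
    have hvno : v ∉ A.other l u := fun hvm =>
      huv (A.meet_unique houspec.1 hl houspec.2.1 houspec.2.2 hul hvm hvl)
    exact sd_eq_one_of_mem_left (A.isLine _ houspec.1) houspec.2.2 hvno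
  have hsdv : sd (A.other l v) u v = 1 := by
    have huno : u ∉ A.other l v := fun hum =>
      huv (A.meet_unique hovspec.1 hl hovspec.2.1 hum hul hovspec.2.2 hvl)
    rw [sd_comm]
    exact sd_eq_one_of_mem_left (A.isLine _ hovspec.1) hovspec.2.2 huno
  -- assemble the finset of relevant lines
  have huov : A.other l u ≠ A.other l v := by
    intro heq
    exact huv (A.meet_unique houspec.1 hl houspec.2.1 houspec.2.2 hul
      (heq ▸ hovspec.2.2) hvl)
  have hounotim : A.other l u ∉ F.image (A.other l) := by
    rw [Finset.mem_image]
    rintro ⟨w, hw, heq⟩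
    obtain ⟨ha, hb, hc⟩ := holw w hw
    have : w = u := A.meet_unique ha hl hb hc (hmemF w hw).2.1 (heq ▸ houspec.2.2) hul
    exact (hmemF w hw).2.2.ne_left this
  have hovnotim : A.other l v ∉ F.image (A.other l) := by
    rw [Finset.mem_image]
    rintro ⟨w, hw, heq⟩
    obtain ⟨ha, hb, hc⟩ := holw w hw
    have : w = v := A.meet_unique ha hl hb hc (hmemF w hw).2.1 (heq ▸ hovspec.2.2) hvl
    exact (hmemF w hw).2.2.ne_right this
  set T : Finset (Set (ℝ × ℝ)) :=
    insert (A.other l u) (insert (A.other l v) (F.image (A.other l))) with hT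
  have hTsub : T ⊆ A.lines := by
    intro m hm
    rw [hT, Finset.mem_insert, Finset.mem_insert] at hm
    rcases hm with rfl | rfl | hm
    · exact houspec.1
    · exact hovspec.1
    · rw [Finset.mem_image] at hm
      obtain ⟨w, hw, rfl⟩ := hm
      exact (holw w hw).1
  have hTsum : ∑ m ∈ T, sd m u v
      = 2 * (F.card : ℝ) + 2 := by
    rw [hT, Finset.sum_insert (by
      rw [Finset.mem_insert]
      rintro (h | h)
      exacts [huov h, hounotim h]), Finset.sum_insert hovnotim,
      Finset.sum_image (fun w hw w' hw' h => hinj (by simpa using hw) (by simpa using hw') h)]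
    rw [hsdu, hsdv, Finset.sum_congr rfl hsd2]
    rw [Finset.sum_const]
    push_cast
    ring
  have hcard : (F.card : ℝ) = (S.ncard : ℝ) := by
    rw [hF, Set.ncard_eq_toFinset_card S hSfin]
  calc 2 * (S.ncard : ℝ) + 2 = ∑ m ∈ T, sd m u v := by rw [hTsum, hcard]
    _ ≤ ∑ m ∈ A.lines, sd m u v :=
        Finset.sum_le_sum_of_subset_of_nonneg hTsub (fun m _ _ => sd_nonneg m u v)

/-! ### Parameterizing a line -/

/-- Parameter of a point relative to the direction of the line `a*x + b*y = c`. -/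
def lpar (a b : ℝ) (p : ℝ × ℝ) : ℝ := -b * p.1 + a * p.2

lemma hK_pos {a b : ℝ} (hab : (a, b) ≠ ((0:ℝ), (0:ℝ))) : 0 < a ^ 2 + b ^ 2 := by
  have h : a ≠ 0 ∨ b ≠ 0 := by
    by_contra h
    push_neg at h
    exact hab (by rw [h.1, h.2])
  rcases h with h | h
  · have : 0 < a ^ 2 := by positivity
    nlinarith [sq_nonneg b]
  · have : 0 < b ^ 2 := by positivity
    nlinarith [sq_nonneg a]

lemma line_point_eq {a b c : ℝ} (hab : (a, b) ≠ ((0:ℝ), (0:ℝ))) {p x : ℝ × ℝ}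
    (hp : a * p.1 + b * p.2 = c) (hx : a * x.1 + b * x.2 = c) :
    x = AffineMap.lineMap p (p + ((-b, a) : ℝ × ℝ))
      ((lpar a b x - lpar a b p) / (a ^ 2 + b ^ 2)) := by
  have hK' : a ^ 2 + b ^ 2 ≠ 0 := ne_of_gt (hK_pos hab)
  rw [AffineMap.lineMap_apply_module', add_sub_cancel_left]
  have h1 : ((lpar a b x - lpar a b p) / (a ^ 2 + b ^ 2)) • ((-b, a) : ℝ × ℝ)
      = ((lpar a b x - lpar a b p) / (a ^ 2 + b ^ 2) * (-b),
         (lpar a b x - lpar a b p) / (a ^ 2 + b ^ 2) * a) := rfl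
  rw [h1]
  have e1 : x.1 = (lpar a b x - lpar a b p) / (a ^ 2 + b ^ 2) * (-b) + p.1 := by
    rw [lpar, lpar, div_mul_eq_mul_div, eq_comm, div_add' _ _ _ hK', div_eq_iff hK']
    linear_combination a * hp - a * hx
  have e2 : x.2 = (lpar a b x - lpar a b p) / (a ^ 2 + b ^ 2) * a + p.2 := by
    rw [lpar, lpar, div_mul_eq_mul_div, eq_comm, div_add' _ _ _ hK', div_eq_iff hK']
    linear_combination b * hp - b * hx
  exact Prod.ext e1 e2

lemma neg_b_a_ne_zero {a b : ℝ} (hab : (a, b) ≠ ((0:ℝ), (0:ℝ))) {p : ℝ × ℝ} :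
    p ≠ p + ((-b, a) : ℝ × ℝ) := by
  intro h
  apply hab
  have h2 : ((-b, a) : ℝ × ℝ) = 0 := by
    have := congrArg (fun q => q - p) h
    simpa [add_sub_cancel_left] using this.symm
  rw [Prod.ext_iff] at h2 ⊢
  simp only [Prod.fst_zero, Prod.snd_zero] at h2 ⊢
  exact ⟨by linarith [h2.2], by linarith [h2.1]⟩

lemma line_inj {a b c : ℝ} (hab : (a, b) ≠ ((0:ℝ), (0:ℝ))) {p q : ℝ × ℝ}
    (hp : a * p.1 + b * p.2 = c) (hq : a * q.1 + b * q.2 = c)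
    (hpq : lpar a b p = lpar a b q) : p = q := by
  rw [line_point_eq hab hp hp, line_point_eq hab hp hq, hpq]

lemma real_shift_sbtw {K t : ℝ} (hK : 0 < K) (x y z : ℝ) :
    Sbtw ℝ ((x - t) / K) ((y - t) / K) ((z - t) / K) ↔ Sbtw ℝ x y z := by
  rw [real_sbtw_iff, real_sbtw_iff]
  rw [div_lt_div_iff_of_pos_right hK, div_lt_div_iff_of_pos_right hK, div_lt_div_iff_of_pos_right hK, div_lt_div_iff_of_pos_right hK]
  rw [sub_lt_sub_iff_right, sub_lt_sub_iff_right, sub_lt_sub_iff_right, sub_lt_sub_iff_right]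

lemma real_shift_wbtw {K t : ℝ} (hK : 0 < K) (x y z : ℝ) :
    Wbtw ℝ ((x - t) / K) ((y - t) / K) ((z - t) / K) ↔ Wbtw ℝ x y z := by
  rw [real_wbtw_iff, real_wbtw_iff]
  rw [div_le_div_iff_of_pos_right hK, div_le_div_iff_of_pos_right hK, div_le_div_iff_of_pos_right hK, div_le_div_iff_of_pos_right hK]
  rw [sub_le_sub_iff_right, sub_le_sub_iff_right, sub_le_sub_iff_right, sub_le_sub_iff_right]

lemma line_sbtw_iff {a b c : ℝ} (hab : (a, b) ≠ ((0:ℝ), (0:ℝ))) {p q r : ℝ × ℝ}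
    (hp : a * p.1 + b * p.2 = c) (hq : a * q.1 + b * q.2 = c) (hr : a * r.1 + b * r.2 = c) :
    Sbtw ℝ p q r ↔ Sbtw ℝ (lpar a b p) (lpar a b q) (lpar a b r) := by
  have hK := hK_pos (a := a) (b := b) hab
  have hinj : Function.Injective (AffineMap.lineMap p (p + ((-b, a) : ℝ × ℝ)) : ℝ →ᵃ[ℝ] ℝ × ℝ) :=
    AffineMap.lineMap_injective ℝ (neg_b_a_ne_zero hab)
  conv_lhs => rw [line_point_eq hab hp hp, line_point_eq hab hp hq, line_point_eq hab hp hr]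
  rw [hinj.sbtw_map_iff]
  exact real_shift_sbtw hK _ _ _

lemma line_wbtw_iff {a b c : ℝ} (hab : (a, b) ≠ ((0:ℝ), (0:ℝ))) {p q r : ℝ × ℝ}
    (hp : a * p.1 + b * p.2 = c) (hq : a * q.1 + b * q.2 = c) (hr : a * r.1 + b * r.2 = c) :
    Wbtw ℝ p q r ↔ Wbtw ℝ (lpar a b p) (lpar a b q) (lpar a b r) := by
  have hK := hK_pos (a := a) (b := b) hab
  have hinj : Function.Injective (AffineMap.lineMap p (p + ((-b, a) : ℝ × ℝ)) : ℝ →ᵃ[ℝ] ℝ × ℝ) :=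
    AffineMap.lineMap_injective ℝ (neg_b_a_ne_zero hab)
  conv_lhs => rw [line_point_eq hab hp hp, line_point_eq hab hp hq, line_point_eq hab hp hr]
  rw [hinj.wbtw_map_iff]
  exact real_shift_wbtw hK _ _ _

/-! ### Real betweenness helpers -/

lemma real_tri {X Y Z : ℝ} (h1 : X ≠ Y) (h2 : Y ≠ Z) (h3 : X ≠ Z) :
    Sbtw ℝ X Y Z ∨ Sbtw ℝ X Z Y ∨ Sbtw ℝ Y X Z := by
  simp only [real_sbtw_iff]
  rcases h1.lt_or_gt with a | a <;> rcases h2.lt_or_gt with b | b <;>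
    rcases h3.lt_or_gt with c | c <;> first | (exfalso; linarith) | tauto

lemma real_pass {X X₁ Z Y : ℝ} (h1 : Sbtw ℝ X Z Y) (h2 : ¬ Sbtw ℝ X Z X₁) (h3 : Z ≠ X₁) :
    Sbtw ℝ X₁ Z Y := by
  rw [real_sbtw_iff] at h1 ⊢
  rw [real_sbtw_iff] at h2
  push_neg at h2
  rcases h1 with ⟨a1, a2⟩ | ⟨a1, a2⟩
  · exact Or.inl ⟨lt_of_le_of_ne (h2.1 a1) h3.symm, a2⟩
  · have hzx : ¬ X₁ < Z := fun hh => absurd (h2.2 hh) (not_le.2 a2)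
    exact Or.inr ⟨a1, lt_of_le_of_ne (not_lt.1 hzx) h3⟩

lemma real_between_step {X X₁ V Z : ℝ} (HB : Sbtw ℝ X X₁ V) (HN : ¬ Sbtw ℝ X Z X₁) :
    (Sbtw ℝ X₁ Z V ↔ (Sbtw ℝ X Z V ∧ Z ≠ X₁)) := by
  rw [real_sbtw_iff] at HB HN ⊢
  rw [real_sbtw_iff]
  push_neg at HN
  constructor
  · rintro (⟨c1, c2⟩ | ⟨c1, c2⟩)
    · rcases HB with ⟨b1, b2⟩ | ⟨b1, b2⟩
      · exact ⟨Or.inl ⟨by linarith, c2⟩, c1.ne'⟩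
      · exact absurd c2 (by linarith)
    · rcases HB with ⟨b1, b2⟩ | ⟨b1, b2⟩
      · exact absurd c1 (by linarith)
      · exact ⟨Or.inr ⟨c1, by linarith⟩, c2.ne⟩
  · rintro ⟨hs | hs, hne⟩
    · rcases HB with ⟨b1, b2⟩ | ⟨b1, b2⟩
      · exact Or.inl ⟨lt_of_le_of_ne (HN.1 hs.1) hne.symm, hs.2⟩
      · exact absurd hs.1 (by linarith [hs.2])
    · rcases HB with ⟨b1, b2⟩ | ⟨b1, b2⟩
      · exact absurd hs.1 (by linarith [hs.2])
      · refine Or.inr ⟨hs.1, ?_⟩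
        rcases hne.lt_or_gt with h | h
        · exact h
        · exact absurd (HN.2 h) (by linarith [hs.2])

lemma real_closer {X Z X₁ : ℝ} (h : Sbtw ℝ X Z X₁) : |Z - X| < |X₁ - X| := by
  rw [real_sbtw_iff] at h
  rcases h with ⟨h1, h2⟩ | ⟨h1, h2⟩
  · rw [abs_of_pos (by linarith), abs_of_pos (by linarith)]; linarith
  · rw [abs_of_neg (by linarith), abs_of_neg (by linarith)]; linarith

lemma real_eq_of_two_firsts {X P Q V : ℝ} (hP : Sbtw ℝ X P V) (hQ : Sbtw ℝ X Q V)
    (h1 : ¬ Sbtw ℝ X Q P) (h2 : ¬ Sbtw ℝ X P Q) : P = Q := by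
  rw [real_sbtw_iff] at hP hQ h1 h2
  push_neg at h1 h2
  rcases hP with ⟨a1, a2⟩ | ⟨a1, a2⟩ <;> rcases hQ with ⟨b1, b2⟩ | ⟨b1, b2⟩
  · exact le_antisymm (h1.1 b1) (h2.1 a1)
  · linarith
  · linarith
  · have hPQ : ¬ P < Q := fun h => absurd (h1.2 h) (not_le.2 b2)
    have hQP : ¬ Q < P := fun h => absurd (h2.2 h) (not_le.2 a2)
    exact le_antisymm (not_lt.1 hQP) (not_lt.1 hPQ)

/-! ### Paths along a line -/

lemma adj_facts {x y : ℝ × ℝ} (hadj : A.graph.Adj x y) :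
    x ≠ y ∧ x ∈ A.verts ∧ y ∈ A.verts :=
  ⟨hadj.1, hadj.2.1, hadj.2.2.1⟩

lemma no_between_of_adj {l : Set (ℝ × ℝ)} (hl : l ∈ A.lines) {x y : ℝ × ℝ}
    (hadj : A.graph.Adj x y) (hx : x ∈ l) (hy : y ∈ l) :
    ∀ w ∈ A.verts, w ∈ l → ¬ Sbtw ℝ x w y := by
  obtain ⟨hne, -, -, m₀, hm₀, hxm₀, hym₀, hno⟩ := hadj
  by_cases h : m₀ = l
  · subst h; exact hno
  · intro w hw hwl hsb
    exact hne (A.meet_unique hm₀ hl h hxm₀ hx hym₀ hy)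

lemma adj_of_no_between {l : Set (ℝ × ℝ)} (hl : l ∈ A.lines) {x y : ℝ × ℝ}
    (hx : x ∈ A.verts) (hy : y ∈ A.verts) (hne : x ≠ y) (hxl : x ∈ l) (hyl : y ∈ l)
    (h : ∀ w ∈ A.verts, w ∈ l → ¬ Sbtw ℝ x w y) : A.graph.Adj x y :=
  ⟨hne, hx, hy, l, hl, hxl, hyl, h⟩

lemma walk_nil_of_path_self {v : ℝ × ℝ} (Q : A.graph.Walk v v) (h : Q.IsPath) :
    Q = SimpleGraph.Walk.nil := by
  cases Q with
  | nil => rfl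
  | cons h' Q' =>
    rw [SimpleGraph.Walk.cons_isPath_iff] at h
    exact absurd Q'.end_mem_support h.2

lemma pass_through {l : Set (ℝ × ℝ)} {a b c : ℝ} (hab : (a, b) ≠ ((0:ℝ), (0:ℝ)))
    (hleq : l = {p : ℝ × ℝ | a * p.1 + b * p.2 = c}) (hl : l ∈ A.lines) {y : ℝ × ℝ} :
    ∀ {x : ℝ × ℝ} (W : A.graph.Walk x y), (∀ w ∈ W.support, w ∈ l) →
      ∀ z ∈ A.verts, z ∈ l → Sbtw ℝ x z y → z ∈ W.support := by
  have hmem : ∀ x : ℝ × ℝ, x ∈ l → a * x.1 + b * x.2 = c := by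
    intro x hx; rw [hleq] at hx; exact hx
  intro x W
  induction W with
  | nil =>
    intro _ z _ _ hsb
    exact absurd ((wbtw_self_iff ℝ).1 hsb.wbtw) hsb.ne_left
  | @cons p₀ p₁ p₂ hadj W ih =>
    intro hsup z hzv hzl hsb
    have hp₀l : p₀ ∈ l := hsup _ (SimpleGraph.Walk.start_mem_support _)
    have hp₁l : p₁ ∈ l := hsup _ (by simp)
    have hp₂l : p₂ ∈ l := hsup _ (SimpleGraph.Walk.end_mem_support _)
    rw [SimpleGraph.Walk.support_cons]
    by_cases hz1 : z = p₁
    · subst hz1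
      exact List.mem_cons_of_mem _ W.start_mem_support
    · have hno : ¬ Sbtw ℝ p₀ z p₁ :=
        A.no_between_of_adj hl hadj hp₀l hp₁l z hzv hzl
      have hstep : Sbtw ℝ p₁ z p₂ := by
        rw [line_sbtw_iff hab (hmem _ hp₁l) (hmem _ hzl) (hmem _ hp₂l)]
        refine real_pass (X := lpar a b p₀) ?_ ?_ ?_
        · exact (line_sbtw_iff hab (hmem _ hp₀l) (hmem _ hzl) (hmem _ hp₂l)).1 hsb
        · intro hc
          exact hno ((line_sbtw_iff hab (hmem _ hp₀l) (hmem _ hzl) (hmem _ hp₁l)).2 hc)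
        · intro hc
          exact hz1 (line_inj hab (hmem _ hzl) (hmem _ hp₁l) hc)
      have hsub : ∀ w ∈ W.support, w ∈ l := by
        intro w hw
        apply hsup w
        rw [SimpleGraph.Walk.support_cons]
        exact List.mem_cons_of_mem _ hw
      exact List.mem_cons_of_mem _ (ih hsub z hzv hzl hstep)

lemma first_vertex {l : Set (ℝ × ℝ)} {a b c : ℝ} (hab : (a, b) ≠ ((0:ℝ), (0:ℝ)))
    (hleq : l = {p : ℝ × ℝ | a * p.1 + b * p.2 = c}) (hl : l ∈ A.lines)
    {v x q₁ : ℝ × ℝ} (hv : v ∈ A.verts) (hvl : v ∈ l) (hxv : x ≠ v)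
    (hadj : A.graph.Adj x q₁) (Q₁ : A.graph.Walk q₁ v)
    (hpath : (SimpleGraph.Walk.cons hadj Q₁).IsPath)
    (hsup : ∀ w ∈ (SimpleGraph.Walk.cons hadj Q₁).support, w ∈ l) :
    q₁ = v ∨ Sbtw ℝ x q₁ v := by
  have hmem : ∀ x : ℝ × ℝ, x ∈ l → a * x.1 + b * x.2 = c := by
    intro x hx; rw [hleq] at hx; exact hx
  by_cases hq1v : q₁ = v
  · exact Or.inl hq1v
  have hxl : x ∈ l := hsup _ (SimpleGraph.Walk.start_mem_support _)
  have hq₁l : q₁ ∈ l := hsup _ (by simp)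
  have hq₁v : q₁ ∈ A.verts := (A.adj_facts hadj).2.2
  have hxq₁ : x ≠ q₁ := (A.adj_facts hadj).1
  have htri := real_tri
    (fun h => hxq₁ (line_inj hab (hmem _ hxl) (hmem _ hq₁l) h))
    (fun h => hq1v (line_inj hab (hmem _ hq₁l) (hmem _ hvl) h))
    (fun h => hxv (line_inj hab (hmem _ hxl) (hmem _ hvl) h))
  rcases htri with h | h | h
  · exact Or.inr ((line_sbtw_iff hab (hmem _ hxl) (hmem _ hq₁l) (hmem _ hvl)).2 h)
  · -- v strictly between x and q₁ : contradicts adjacency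
    exfalso
    have : Sbtw ℝ x v q₁ := (line_sbtw_iff hab (hmem _ hxl) (hmem _ hvl) (hmem _ hq₁l)).2 h
    exact A.no_between_of_adj hl hadj hxl hq₁l v hv hvl this
  · -- x strictly between q₁ and v : walk must pass through x again
    exfalso
    have hx' : Sbtw ℝ q₁ x v := (line_sbtw_iff hab (hmem _ hq₁l) (hmem _ hxl) (hmem _ hvl)).2 h
    have hxverts : x ∈ A.verts := (A.adj_facts hadj).2.1
    have hsub : ∀ w ∈ Q₁.support, w ∈ l := by
      intro w hw
      apply hsup w
      rw [SimpleGraph.Walk.support_cons]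
      exact List.mem_cons_of_mem _ hw
    have hxmem : x ∈ Q₁.support :=
      A.pass_through hab hleq hl Q₁ hsub x hxverts hxl hx'
    rw [SimpleGraph.Walk.cons_isPath_iff] at hpath
    exact hpath.2 hxmem

lemma step_set {l : Set (ℝ × ℝ)} {a b c : ℝ} (hab : (a, b) ≠ ((0:ℝ), (0:ℝ)))
    (hleq : l = {p : ℝ × ℝ | a * p.1 + b * p.2 = c})
    {x x₁ v : ℝ × ℝ} (hxl : x ∈ l) (hx₁l : x₁ ∈ l) (hvl : v ∈ l)
    (hB : Sbtw ℝ x x₁ v) (hnb : ∀ z ∈ A.verts, z ∈ l → ¬ Sbtw ℝ x z x₁) :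
    {w | w ∈ A.verts ∧ w ∈ l ∧ Sbtw ℝ x₁ w v}
      = {w | w ∈ A.verts ∧ w ∈ l ∧ Sbtw ℝ x w v} \ {x₁} := by
  have hmem : ∀ x : ℝ × ℝ, x ∈ l → a * x.1 + b * x.2 = c := by
    intro x hx; rw [hleq] at hx; exact hx
  ext z
  simp only [Set.mem_setOf_eq, Set.mem_diff, Set.mem_singleton_iff]
  constructor
  · rintro ⟨hzv, hzl, hsb⟩
    have := (real_between_step
      ((line_sbtw_iff hab (hmem _ hxl) (hmem _ hx₁l) (hmem _ hvl)).1 hB)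
      (fun hc => hnb z hzv hzl
        ((line_sbtw_iff hab (hmem _ hxl) (hmem _ hzl) (hmem _ hx₁l)).2 hc))).1
      ((line_sbtw_iff hab (hmem _ hx₁l) (hmem _ hzl) (hmem _ hvl)).1 hsb)
    exact ⟨⟨hzv, hzl, (line_sbtw_iff hab (hmem _ hxl) (hmem _ hzl) (hmem _ hvl)).2 this.1⟩,
      fun hc => this.2 (by rw [hc])⟩
  · rintro ⟨⟨hzv, hzl, hsb⟩, hzx₁⟩
    refine ⟨hzv, hzl, (line_sbtw_iff hab (hmem _ hx₁l) (hmem _ hzl) (hmem _ hvl)).2 ?_⟩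
    refine ((real_between_step
      ((line_sbtw_iff hab (hmem _ hxl) (hmem _ hx₁l) (hmem _ hvl)).1 hB)
      (fun hc => hnb z hzv hzl
        ((line_sbtw_iff hab (hmem _ hxl) (hmem _ hzl) (hmem _ hx₁l)).2 hc))).2)
      ⟨(line_sbtw_iff hab (hmem _ hxl) (hmem _ hzl) (hmem _ hvl)).1 hsb, ?_⟩
    exact fun hc => hzx₁ (line_inj hab (hmem _ hzl) (hmem _ hx₁l) hc)

lemma exists_online_path {l : Set (ℝ × ℝ)} {a b c : ℝ} (hab : (a, b) ≠ ((0:ℝ), (0:ℝ)))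
    (hleq : l = {p : ℝ × ℝ | a * p.1 + b * p.2 = c}) (hl : l ∈ A.lines)
    {v : ℝ × ℝ} (hvv : v ∈ A.verts) (hvl : v ∈ l) :
    ∀ (k : ℕ) (x : ℝ × ℝ), x ∈ A.verts → x ∈ l → x ≠ v →
      {w | w ∈ A.verts ∧ w ∈ l ∧ Sbtw ℝ x w v}.ncard = k →
      ∃ P : A.graph.Walk x v, P.IsPath ∧ ∀ w ∈ P.support, w ∈ l ∧ Wbtw ℝ x w v := by
  have hmem : ∀ x : ℝ × ℝ, x ∈ l → a * x.1 + b * x.2 = c := by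
    intro x hx; rw [hleq] at hx; exact hx
  intro k
  induction k using Nat.strong_induction_on with
  | _ k ih =>
    intro x hx hxl hxv hcard
    have hSfin : {w | w ∈ A.verts ∧ w ∈ l ∧ Sbtw ℝ x w v}.Finite :=
      A.verts_finite_s8.subset (fun w hw => hw.1)
    rcases Set.eq_empty_or_nonempty {w | w ∈ A.verts ∧ w ∈ l ∧ Sbtw ℝ x w v} with hS | hS
    · -- adjacent
      have hadj : A.graph.Adj x v := by
        refine A.adj_of_no_between hl hx hvv hxv hxl hvl ?_
        intro w hw hwl hsb
        have : w ∈ {w | w ∈ A.verts ∧ w ∈ l ∧ Sbtw ℝ x w v} := ⟨hw, hwl, hsb⟩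
        rw [hS] at this
        exact this
      refine ⟨SimpleGraph.Walk.cons hadj SimpleGraph.Walk.nil, ?_, ?_⟩
      · rw [SimpleGraph.Walk.cons_isPath_iff]
        exact ⟨SimpleGraph.Walk.IsPath.nil, by simp [hxv]⟩
      · intro w hw
        rw [SimpleGraph.Walk.support_cons, SimpleGraph.Walk.support_nil, List.mem_cons,
          List.mem_singleton] at hw
        rcases hw with rfl | rfl
        · exact ⟨hxl, wbtw_self_left ℝ w v⟩
        · exact ⟨hvl, wbtw_self_right ℝ x w⟩
    · -- pick nearest between vertex
      obtain ⟨x₁, hx₁F, hmin⟩ := Finset.exists_min_image hSfin.toFinset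
        (fun z => |lpar a b z - lpar a b x|) (by rwa [Set.Finite.toFinset_nonempty])
      rw [Set.Finite.mem_toFinset] at hx₁F
      obtain ⟨hx₁v, hx₁l, hx₁sb⟩ := hx₁F
      have hnb : ∀ z ∈ A.verts, z ∈ l → ¬ Sbtw ℝ x z x₁ := by
        intro z hzv hzl hsb
        have hzS : z ∈ {w | w ∈ A.verts ∧ w ∈ l ∧ Sbtw ℝ x w v} := by
          refine ⟨hzv, hzl, ?_⟩
          rw [line_sbtw_iff hab (hmem _ hxl) (hmem _ hzl) (hmem _ hvl), real_sbtw_iff]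
          have h1 := (line_sbtw_iff hab (hmem _ hxl) (hmem _ hzl) (hmem _ hx₁l)).1 hsb
          have h2 := (line_sbtw_iff hab (hmem _ hxl) (hmem _ hx₁l) (hmem _ hvl)).1 hx₁sb
          rw [real_sbtw_iff] at h1 h2
          rcases h1 with ⟨a1, a2⟩ | ⟨a1, a2⟩ <;> rcases h2 with ⟨b1, b2⟩ | ⟨b1, b2⟩ <;>
            first
              | (exfalso; linarith)
              | (left; constructor <;> linarith)
              | (right; constructor <;> linarith)
        have hlt := real_closer ((line_sbtw_iff hab (hmem _ hxl) (hmem _ hzl) (hmem _ hx₁l)).1 hsb)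
        have := hmin z (by rwa [Set.Finite.mem_toFinset])
        linarith
      have hadj : A.graph.Adj x x₁ := A.adj_of_no_between hl hx hx₁v hx₁sb.ne_left.symm hxl hx₁l hnb
      have hsdiff := A.step_set hab hleq hxl hx₁l hvl hx₁sb hnb
      have hx₁v' : x₁ ≠ v := hx₁sb.ne_right
      have hk1 : 1 ≤ k := by
        rw [← hcard]
        exact (Set.ncard_pos hSfin).2 hS
      have hcard' : {w | w ∈ A.verts ∧ w ∈ l ∧ Sbtw ℝ x₁ w v}.ncard = k - 1 := by
        rw [hsdiff, Set.ncard_diff_singleton_of_mem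
          (show x₁ ∈ {w | w ∈ A.verts ∧ w ∈ l ∧ Sbtw ℝ x w v} from ⟨hx₁v, hx₁l, hx₁sb⟩),
          hcard]
      obtain ⟨P₁, hP₁path, hP₁sup⟩ := ih (k - 1) (by omega) x₁ hx₁v hx₁l hx₁v' hcard'
      refine ⟨SimpleGraph.Walk.cons hadj P₁, ?_, ?_⟩
      · rw [SimpleGraph.Walk.cons_isPath_iff]
        refine ⟨hP₁path, fun hxmem => ?_⟩
        have hW := (hP₁sup x hxmem).2
        exact hx₁sb.ne_left ((wbtw_swap_left_iff (R := ℝ) v).1 ⟨hW, hx₁sb.wbtw⟩)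
      · intro w hw
        rw [SimpleGraph.Walk.support_cons, List.mem_cons] at hw
        rcases hw with rfl | hw
        · exact ⟨hxl, wbtw_self_left ℝ w v⟩
        · obtain ⟨hwl, hwW⟩ := hP₁sup w hw
          exact ⟨hwl, hx₁sb.wbtw.trans_right hwW⟩

lemma online_path_spec {l : Set (ℝ × ℝ)} {a b c : ℝ} (hab : (a, b) ≠ ((0:ℝ), (0:ℝ)))
    (hleq : l = {p : ℝ × ℝ | a * p.1 + b * p.2 = c}) (hl : l ∈ A.lines)
    {v : ℝ × ℝ} (hvv : v ∈ A.verts) (hvl : v ∈ l) :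
    ∀ (k : ℕ) (x : ℝ × ℝ), x ∈ A.verts → x ∈ l → x ≠ v →
      {w | w ∈ A.verts ∧ w ∈ l ∧ Sbtw ℝ x w v}.ncard = k →
      ∀ (P : A.graph.Walk x v), P.IsPath → (∀ w ∈ P.support, w ∈ l) →
        P.length = k + 1 ∧
        ∀ (Q : A.graph.Walk x v), Q.IsPath → (∀ w ∈ Q.support, w ∈ l) → P = Q := by
  have hmem : ∀ x : ℝ × ℝ, x ∈ l → a * x.1 + b * x.2 = c := by
    intro x hx; rw [hleq] at hx; exact hx
  intro k
  induction k using Nat.strong_induction_on with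
  | _ k ih =>
    intro x hx hxl hxv hcard P hPpath hPsup
    have hSfin : {w | w ∈ A.verts ∧ w ∈ l ∧ Sbtw ℝ x w v}.Finite :=
      A.verts_finite_s8.subset (fun w hw => hw.1)
    cases P with
    | nil => exact absurd rfl hxv
    | @cons _ p₁ _ hadjP P₁ =>
      have hPsup₁ : ∀ w ∈ P₁.support, w ∈ l := by
        intro w hw
        apply hPsup w
        rw [SimpleGraph.Walk.support_cons]
        exact List.mem_cons_of_mem _ hw
      have hp₁l : p₁ ∈ l := hPsup _ (by simp)
      have hp₁v : p₁ ∈ A.verts := (A.adj_facts hadjP).2.2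
      rcases A.first_vertex hab hleq hl hvv hvl hxv hadjP P₁ hPpath hPsup with hp₁eq | hp₁sb
      · -- first vertex is already v
        subst hp₁eq
        have hS0 : {w | w ∈ A.verts ∧ w ∈ l ∧ Sbtw ℝ x w p₁} = ∅ := by
          ext w
          simp only [Set.mem_setOf_eq, Set.mem_empty_iff_false, iff_false, not_and]
          intro hw hwl
          exact A.no_between_of_adj hl hadjP hxl hp₁l w hw hwl
        have hk0 : k = 0 := by rw [← hcard, hS0, Set.ncard_empty]
        have hP₁nil : P₁ = SimpleGraph.Walk.nil :=
          A.walk_nil_of_path_self P₁ (((SimpleGraph.Walk.cons_isPath_iff _ _).1 hPpath)).1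
        subst hP₁nil
        subst hk0
        refine ⟨rfl, ?_⟩
        intro Q hQpath hQsup
        cases Q with
        | nil => exact absurd rfl hxv
        | @cons _ q₁ _ hadjQ Q₁ =>
          rcases A.first_vertex hab hleq hl hvv hvl hxv hadjQ Q₁ hQpath hQsup with hq₁eq | hq₁sb
          · subst hq₁eq
            have : Q₁ = SimpleGraph.Walk.nil :=
              A.walk_nil_of_path_self Q₁ (((SimpleGraph.Walk.cons_isPath_iff _ _).1 hQpath)).1
            subst this
            rfl
          · exfalso
            have hq₁l : q₁ ∈ l := hQsup _ (by simp)
            have hq₁v : q₁ ∈ A.verts := (A.adj_facts hadjQ).2.2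
            have : q₁ ∈ {w | w ∈ A.verts ∧ w ∈ l ∧ Sbtw ℝ x w p₁} := ⟨hq₁v, hq₁l, hq₁sb⟩
            rw [hS0] at this
            exact this
      · -- first vertex strictly between
        have hnb : ∀ z ∈ A.verts, z ∈ l → ¬ Sbtw ℝ x z p₁ := by
          intro z hzv hzl
          exact A.no_between_of_adj hl hadjP hxl hp₁l z hzv hzl
        have hsdiff := A.step_set hab hleq hxl hp₁l hvl hp₁sb hnb
        have hp₁mem : p₁ ∈ {w | w ∈ A.verts ∧ w ∈ l ∧ Sbtw ℝ x w v} := ⟨hp₁v, hp₁l, hp₁sb⟩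
        have hk1 : 1 ≤ k := by
          rw [← hcard]
          exact (Set.ncard_pos hSfin).2 ⟨p₁, hp₁mem⟩
        have hcard' : {w | w ∈ A.verts ∧ w ∈ l ∧ Sbtw ℝ p₁ w v}.ncard = k - 1 := by
          rw [hsdiff, Set.ncard_diff_singleton_of_mem hp₁mem, hcard]
        have hIH := ih (k - 1) (by omega) p₁ hp₁v hp₁l hp₁sb.ne_right hcard' P₁
          (((SimpleGraph.Walk.cons_isPath_iff _ _).1 hPpath)).1 hPsup₁
        constructor
        · rw [SimpleGraph.Walk.length_cons, hIH.1]
          omega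
        · intro Q hQpath hQsup
          cases Q with
          | nil => exact absurd rfl hxv
          | @cons _ q₁ _ hadjQ Q₁ =>
            have hQsup₁ : ∀ w ∈ Q₁.support, w ∈ l := by
              intro w hw
              apply hQsup w
              rw [SimpleGraph.Walk.support_cons]
              exact List.mem_cons_of_mem _ hw
            have hq₁l : q₁ ∈ l := hQsup _ (by simp)
            have hq₁v : q₁ ∈ A.verts := (A.adj_facts hadjQ).2.2
            rcases A.first_vertex hab hleq hl hvv hvl hxv hadjQ Q₁ hQpath hQsup with hq₁eq | hq₁sb
            · exfalso
              subst hq₁eq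
              exact A.no_between_of_adj hl hadjQ hxl hvl p₁ hp₁v hp₁l hp₁sb
            · -- q₁ = p₁
              have hq₁p₁ : q₁ = p₁ := by
                have hnbQ : ∀ z ∈ A.verts, z ∈ l → ¬ Sbtw ℝ x z q₁ := by
                  intro z hzv hzl
                  exact A.no_between_of_adj hl hadjQ hxl hq₁l z hzv hzl
                have heq := real_eq_of_two_firsts
                  ((line_sbtw_iff hab (hmem _ hxl) (hmem _ hq₁l) (hmem _ hvl)).1 hq₁sb)
                  ((line_sbtw_iff hab (hmem _ hxl) (hmem _ hp₁l) (hmem _ hvl)).1 hp₁sb)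
                  (fun hc => hnbQ p₁ hp₁v hp₁l
                    ((line_sbtw_iff hab (hmem _ hxl) (hmem _ hp₁l) (hmem _ hq₁l)).2 hc))
                  (fun hc => hnb q₁ hq₁v hq₁l
                    ((line_sbtw_iff hab (hmem _ hxl) (hmem _ hq₁l) (hmem _ hp₁l)).2 hc))
                exact line_inj hab (hmem _ hq₁l) (hmem _ hp₁l) heq
              subst hq₁p₁
              have := hIH.2 Q₁ (((SimpleGraph.Walk.cons_isPath_iff _ _).1 hQpath)).1 hQsup₁
              rw [this]

end SimpleLineArrangement

theorem shortest_path_on_common_line (n : ℕ) (hn : 3 ≤ n) (A : SimpleLineArrangement n)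
    (u v : ℝ × ℝ) (hu : u ∈ A.verts) (hv : v ∈ A.verts) (huv : u ≠ v)
    (l : Set (ℝ × ℝ)) (hl : l ∈ A.lines) (hul : u ∈ l) (hvl : v ∈ l) :
    (∃! P : A.graph.Walk u v, P.IsPath ∧ P.length = A.graph.dist u v) ∧
    ∀ P : A.graph.Walk u v, P.IsPath → P.length = A.graph.dist u v →
      (∀ w ∈ P.support, w ∈ l) ∧
      P.length = 1 + {w | w ∈ A.verts ∧ w ∈ l ∧ Sbtw ℝ u w v}.ncard := by
  classical
  obtain ⟨a, b, c, hab, hleq⟩ := A.isLine l hl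
  set k := {w | w ∈ A.verts ∧ w ∈ l ∧ Sbtw ℝ u w v}.ncard with hk
  obtain ⟨P₀, hP₀path, hP₀sup⟩ := A.exists_online_path hab hleq hl hv hvl k u hu hul huv rfl
  have hP₀supl : ∀ w ∈ P₀.support, w ∈ l := fun w hw => (hP₀sup w hw).1
  have hspec := A.online_path_spec hab hleq hl hv hvl k u hu hul huv rfl P₀ hP₀path hP₀supl
  have hP₀len : P₀.length = k + 1 := hspec.1
  have hlow : ∀ W : A.graph.Walk u v, k + 1 ≤ W.length := by
    intro W
    have h1 := A.sum_ge_of_between hl hu hv huv hul hvl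
    have h2 := A.walk_sum_le W
    rw [← hk] at h1
    have h3 : (k : ℝ) + 1 ≤ (W.length : ℝ) := by linarith
    exact_mod_cast h3
  have hdist : A.graph.dist u v = k + 1 := by
    have hub : A.graph.dist u v ≤ k + 1 := hP₀len ▸ SimpleGraph.dist_le P₀
    have hre : A.graph.Reachable u v := ⟨P₀⟩
    obtain ⟨W, hW⟩ := hre.exists_walk_length_eq_dist
    have := hlow W
    omega
  have hsupl : ∀ (P : A.graph.Walk u v), P.length = A.graph.dist u v →
      ∀ w ∈ P.support, w ∈ l := by
    intro P hlen w hw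
    by_contra hwl
    have h3 := A.walk_sum_off_line hl hul hvl P hw hwl
    have h1 := A.sum_ge_of_between hl hu hv huv hul hvl
    rw [← hk] at h1
    rw [hlen, hdist] at h3
    push_cast at h3
    linarith
  constructor
  · refine ⟨P₀, ⟨hP₀path, by rw [hdist, hP₀len]⟩, ?_⟩
    rintro Q ⟨hQpath, hQlen⟩
    exact (hspec.2 Q hQpath (hsupl Q hQlen)).symm
  · intro P hPpath hPlen
    refine ⟨hsupl P hPlen, ?_⟩
    rw [hPlen, hdist]
    omega
end
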